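/- In the setting of the quadtree mixture algorithm (model prior p(m) = ∏_{s ∈ L^m}(1 − g_s) ∏_{s' ∈ I^m} g_{s'} with g_s = 0 for singleton blocks; strictly positive per-block predictive pmfs q̃(· | v^{t−1}, s); likelihood p(v^t | m) = ∏_{i ≤ t} q̃(v_i | v^{i−1}, s_m(i)); and the recursive definitions of q(v_t | v^{t−1}, s) and the updates g_{s|t}), the posterior over models retains the product form of the prior: for every t ≥ 0 and every full quadtree m of depth ≤ d_max, p(m | v^t) = ∏_{s ∈ L^m} (1 − g_{s|t}) · ∏_{s' ∈ I^m} g_{s'|t}. -/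

import Mathlib

inductive FullTree (k : ℕ) : ℕ → Type where
  | leaf {D : ℕ} : FullTree k D
  | node {D : ℕ} (c : Fin k → FullTree k D) : FullTree k (D + 1)

namespace FullTree

def equivZero (k : ℕ) : FullTree k 0 ≃ Unit where
  toFun _ := ()
  invFun _ := .leaf
  left_inv t := by cases t; rfl
  right_inv _ := rfl

def equivSucc (k D : ℕ) : FullTree k (D + 1) ≃ Option (Fin k → FullTree k D) where
  toFun t := match t with
    | .leaf => none
    | .node c => some c
  invFun o := match o with
    | none => .leaf
    | some c => .node c
  left_inv t := by cases t <;> rfl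
  right_inv o := by cases o <;> rfl

instance instFintype (k : ℕ) : (D : ℕ) → Fintype (FullTree k D)
  | 0 => Fintype.ofEquiv Unit (equivZero k).symm
  | (D + 1) => letI := instFintype k D; Fintype.ofEquiv _ (equivSucc k D).symm

noncomputable instance (k D : ℕ) : DecidableEq (FullTree k D) := Classical.decEq _

/-- The set of (paths to) leaf nodes of a full subtree whose root has path `u`. -/
def leaves {k : ℕ} : {D : ℕ} → List (Fin k) → FullTree k D → Finset (List (Fin k))
  | _, u, .leaf => {u}
  | _, u, .node c => Finset.univ.biUnion fun i => leaves (u ++ [i]) (c i)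

/-- The set of (paths to) inner nodes of a full subtree whose root has path `u`. -/
def inners {k : ℕ} : {D : ℕ} → List (Fin k) → FullTree k D → Finset (List (Fin k))
  | _, _, .leaf => ∅
  | _, u, .node c => insert u (Finset.univ.biUnion fun i => inners (u ++ [i]) (c i))

/-- The weight ∏_{u ∈ L^T} (1 - g u) * ∏_{u ∈ I^T} g u of a full subtree rooted at path `u`. -/
noncomputable def weight {k D : ℕ} (g : List (Fin k) → ℝ) (u : List (Fin k))
    (T : FullTree k D) : ℝ :=
  (∏ s ∈ leaves u T, (1 - g s)) * ∏ s ∈ inners u T, g s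

end FullTree

namespace FullTree

/-- Follow the path `p` down the full subtree `T` (whose root has path `u`) until a leaf of
`T` is reached; returns the path of that leaf.  For a pixel `p` (a path of full length
`dmax`), `leafOf [] m p` is the unique leaf block `s_m` of `m` containing the pixel `p`. -/
def leafOf {k : ℕ} : {D : ℕ} → List (Fin k) → FullTree k D → List (Fin k) → List (Fin k)
  | _, u, .leaf, _ => u
  | _, u, .node _, [] => u
  | _, u, .node c, i :: p => leafOf (u ++ [i]) (c i) p

end FullTree

/-- The likelihood `p(v^{t-1} | m) = ∏_{i < t} q̃(v_i | v^{i-1}, s_m(i))` of the first `t`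
pixel values under model `m`, where `qt i s x = q̃(x | v^{i-1}, s)` is the per-block
predictive pmf and `s_m(i)` the unique leaf of `m` containing pixel `i`. -/
noncomputable def like (dmax : ℕ) {V : Type} (qt : ℕ → List (Fin 4) → V → ℝ)
    (v : ℕ → V) (pix : ℕ → List (Fin 4)) (m : FullTree 4 dmax) (t : ℕ) : ℝ :=
  ∏ i ∈ Finset.range t, qt i (FullTree.leafOf [] m (pix i)) (v i)

/-- `Qd dmax qt v pix G t j` is the recursively mixed coding probability
`q(v_t | v^{t-1}, s)` at the block `s = (pix t).take (dmax - j)` on the path `S_t` of blocks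
containing pixel `t` (`j` is the distance from `s` down to the singleton block of `S_t`),
computed with the current weights `G = g_{·|t-1}`:
`q = q̃` at singleton blocks and `q = (1 - g_{s|t-1}) q̃ + g_{s|t-1} q(child)` otherwise. -/
noncomputable def Qd (dmax : ℕ) {V : Type} (qt : ℕ → List (Fin 4) → V → ℝ)
    (v : ℕ → V) (pix : ℕ → List (Fin 4)) (G : List (Fin 4) → ℝ) (t : ℕ) : ℕ → ℝ
  | 0 => qt t ((pix t).take dmax) (v t)
  | j + 1 =>
    (1 - G ((pix t).take (dmax - (j + 1)))) * qt t ((pix t).take (dmax - (j + 1))) (v t)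
      + G ((pix t).take (dmax - (j + 1))) * Qd dmax qt v pix G t j

/-- One step of the weight update: `g_{s|t} = g_{s|t-1}` if `s ∉ S_t` or `|s| = 1`
(`s ∈ S_t` iff `s` is a prefix of the pixel path `pix t`; `|s| = 1` iff `s.length = dmax`),
and `g_{s|t} = g_{s|t-1} · q(v_t | v^{t-1}, s_child) / q(v_t | v^{t-1}, s)` otherwise. -/
noncomputable def Gnext (dmax : ℕ) {V : Type} (qt : ℕ → List (Fin 4) → V → ℝ)
    (v : ℕ → V) (pix : ℕ → List (Fin 4)) (G : List (Fin 4) → ℝ) (t : ℕ)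
    (s : List (Fin 4)) : ℝ :=
  if s <+: pix t ∧ s.length < dmax then
    G s * Qd dmax qt v pix G t (dmax - s.length - 1) / Qd dmax qt v pix G t (dmax - s.length)
  else G s

/-- `GT dmax qt v pix g t s = g_{s|t-1}`: the sequentially updated weights, with
`GT ... 0 s = g_{s|-1} = g s`. -/
noncomputable def GT (dmax : ℕ) {V : Type} (qt : ℕ → List (Fin 4) → V → ℝ)
    (v : ℕ → V) (pix : ℕ → List (Fin 4)) (g : List (Fin 4) → ℝ) : ℕ → List (Fin 4) → ℝ
  | 0 => g
  | t + 1 => Gnext dmax qt v pix (GT dmax qt v pix g t) t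

section Aux

namespace FullTree

lemma prefix_of_mem_leaves {k : ℕ} : ∀ {D : ℕ} (u : List (Fin k)) (T : FullTree k D)
    (s : List (Fin k)), s ∈ leaves u T → u <+: s
  | _, u, .leaf, s, hs => by
      simp only [leaves, Finset.mem_singleton] at hs
      simp [hs]
  | _, u, .node c, s, hs => by
      simp only [leaves, Finset.mem_biUnion, Finset.mem_univ, true_and] at hs
      obtain ⟨i, hi⟩ := hs
      exact (u.prefix_append [i]).trans (prefix_of_mem_leaves _ _ _ hi)

lemma prefix_of_mem_inners {k : ℕ} : ∀ {D : ℕ} (u : List (Fin k)) (T : FullTree k D)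
    (s : List (Fin k)), s ∈ inners u T → u <+: s
  | _, u, .leaf, s, hs => by simp [inners] at hs
  | _, u, .node c, s, hs => by
      simp only [inners, Finset.mem_insert, Finset.mem_biUnion, Finset.mem_univ,
        true_and] at hs
      rcases hs with rfl | ⟨i, hi⟩
      · exact List.prefix_refl _
      · exact (u.prefix_append [i]).trans (prefix_of_mem_inners _ _ _ hi)

lemma weight_congr {k D : ℕ} {G G' : List (Fin k) → ℝ} (u : List (Fin k)) (T : FullTree k D)
    (h : ∀ s, u <+: s → G s = G' s) : weight G u T = weight G' u T := by
  unfold weight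
  rw [Finset.prod_congr rfl fun s hs => by rw [h s (prefix_of_mem_leaves u T s hs)],
      Finset.prod_congr rfl fun s hs => h s (prefix_of_mem_inners u T s hs)]

lemma child_disjoint {k D : ℕ} (u : List (Fin k)) (c : Fin k → FullTree k D)
    (f : List (Fin k) → FullTree k D → Finset (List (Fin k)))
    (hf : ∀ w T s, s ∈ f w T → w <+: s) :
    Set.PairwiseDisjoint (↑(Finset.univ : Finset (Fin k)) : Set (Fin k)) fun i => f (u ++ [i]) (c i) := by
  intro i _ j _ hij
  rw [Function.onFun, Finset.disjoint_left]
  intro s hsi hsj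
  have h1 := hf _ _ _ hsi
  have h2 := hf _ _ _ hsj
  have h3 := List.prefix_of_prefix_length_le h1 h2 (by simp)
  have h4 := h3.eq_of_length (by simp)
  simp only [List.append_cancel_left_eq, List.cons.injEq] at h4
  exact hij h4.1

lemma weight_node {k D : ℕ} (G : List (Fin k) → ℝ) (u : List (Fin k))
    (c : Fin k → FullTree k D) :
    weight G u (.node c) = G u * ∏ i, weight G (u ++ [i]) (c i) := by
  have hu : u ∉ Finset.univ.biUnion fun i => inners (u ++ [i]) (c i) := by
    intro hu
    simp only [Finset.mem_biUnion, Finset.mem_univ, true_and] at hu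
    obtain ⟨i, hi⟩ := hu
    have := (prefix_of_mem_inners _ _ _ hi).length_le
    simp at this
  unfold weight
  show (∏ s ∈ Finset.univ.biUnion fun i => leaves (u ++ [i]) (c i), (1 - G s)) *
    ∏ s ∈ insert u (Finset.univ.biUnion fun i => inners (u ++ [i]) (c i)), G s = _
  rw [Finset.prod_insert hu,
    Finset.prod_biUnion (child_disjoint u c _ prefix_of_mem_leaves),
    Finset.prod_biUnion (child_disjoint u c _ prefix_of_mem_inners),
    Finset.prod_mul_distrib]
  ring

lemma weight_leaf {k D : ℕ} (G : List (Fin k) → ℝ) (u : List (Fin k)) :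
    weight G u (.leaf : FullTree k D) = 1 - G u := by
  simp [weight, leaves, inners]

lemma sum_weight {k dmax : ℕ} (G : List (Fin k) → ℝ)
    (hGz : ∀ s, s.length = dmax → G s = 0) :
    ∀ (D : ℕ) (u : List (Fin k)), u.length + D = dmax →
      ∑ T : FullTree k D, weight G u T = 1
  | 0, u, hu => by
      rw [← Equiv.sum_comp (equivZero k).symm (weight G u)]
      simp [equivZero, weight_leaf, hGz u (by omega)]
  | (D + 1), u, hu => by
      rw [← Equiv.sum_comp (equivSucc k D).symm (weight G u), Fintype.sum_option]
      have h0 : (equivSucc k D).symm none = (.leaf : FullTree k (D + 1)) := rfl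
      have h1 : ∀ c : Fin k → FullTree k D, (equivSucc k D).symm (some c) = .node c :=
        fun _ => rfl
      simp only [h0, h1, weight_leaf, weight_node]
      rw [← Finset.mul_sum, ← Fintype.prod_sum]
      have : ∀ i : Fin k, ∑ T : FullTree k D, weight G (u ++ [i]) T = 1 := fun i =>
        sum_weight G hGz D (u ++ [i]) (by simp; omega)
      simp [this]

end FullTree

variable {dmax : ℕ} {V : Type} {qt : ℕ → List (Fin 4) → V → ℝ} {v : ℕ → V}
  {pix : ℕ → List (Fin 4)} {G : List (Fin 4) → ℝ} {t : ℕ}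

lemma Qd_pos (hqt : ∀ t s x, 0 < qt t s x)
    (hG : ∀ s : List (Fin 4), s.length ≤ dmax → G s ∈ Set.Icc (0 : ℝ) 1) :
    ∀ j, 0 < Qd dmax qt v pix G t j
  | 0 => hqt _ _ _
  | (j + 1) => by
      have ha := hG ((pix t).take (dmax - (j + 1)))
        (by rw [List.length_take]; omega)
      have hq := hqt t ((pix t).take (dmax - (j + 1))) (v t)
      have hQ := Qd_pos hqt hG j
      rcases eq_or_lt_of_le ha.2 with h1 | h1
      · show (0:ℝ) < (1 - G _) * qt _ _ _ + G _ * Qd dmax qt v pix G t j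
        rw [h1]; simpa using hQ
      · show (0:ℝ) < (1 - G _) * qt _ _ _ + G _ * Qd dmax qt v pix G t j
        have := mul_pos (by linarith : (0:ℝ) < 1 - G ((pix t).take (dmax - (j + 1)))) hq
        nlinarith [ha.1, hQ.le]

lemma Qd_succ_eq (hpre : (pix t).take (dmax - (j + 1)) = s) :
    Qd dmax qt v pix G t (j + 1)
      = (1 - G s) * qt t s (v t) + G s * Qd dmax qt v pix G t j := by
  rw [← hpre]; rfl

lemma Gnext_mem (hqt : ∀ t s x, 0 < qt t s x)
    (hG : ∀ s : List (Fin 4), s.length ≤ dmax → G s ∈ Set.Icc (0 : ℝ) 1) :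
    ∀ s : List (Fin 4), s.length ≤ dmax →
      Gnext dmax qt v pix G t s ∈ Set.Icc (0 : ℝ) 1 := by
  intro s hs
  unfold Gnext
  split
  case isTrue h =>
    obtain ⟨hpre, hlen⟩ := h
    set j := dmax - s.length - 1 with hjdef
    have hj : dmax - s.length = j + 1 := by omega
    have hQ1 := Qd_pos (v := v) (pix := pix) (t := t) hqt hG j
    have hQ2 := Qd_pos (v := v) (pix := pix) (t := t) hqt hG (j + 1)
    have htake : (pix t).take (dmax - (j + 1)) = s := by
      rw [show dmax - (j + 1) = s.length by omega]
      exact (List.prefix_iff_eq_take.mp hpre).symm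
    rw [hj]
    constructor
    · exact div_nonneg (mul_nonneg (hG s hs).1 hQ1.le) hQ2.le
    · rw [div_le_one hQ2, Qd_succ_eq htake]
      nlinarith [mul_nonneg (sub_nonneg.2 (hG s hs).2) (hqt t s (v t)).le]
  case isFalse => exact hG s hs

lemma Gnext_zero (hGz : ∀ s : List (Fin 4), s.length = dmax → G s = 0) :
    ∀ s : List (Fin 4), s.length = dmax → Gnext dmax qt v pix G t s = 0 := by
  intro s hs
  unfold Gnext
  rw [if_neg (by rintro ⟨-, h⟩; omega)]
  exact hGz s hs

lemma weight_gnext_off {D : ℕ} (u : List (Fin 4)) (T : FullTree 4 D)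
    (h : ¬ u <+: pix t) :
    FullTree.weight (Gnext dmax qt v pix G t) u T = FullTree.weight G u T := by
  apply FullTree.weight_congr
  intro s hs
  unfold Gnext
  rw [if_neg]
  rintro ⟨h1, -⟩
  exact h (hs.trans h1)

lemma weight_step (hqt : ∀ t s x, 0 < qt t s x)
    (hG : ∀ s : List (Fin 4), s.length ≤ dmax → G s ∈ Set.Icc (0 : ℝ) 1)
    (hpixt : (pix t).length = dmax) :
    ∀ {D : ℕ} (u : List (Fin 4)) (T : FullTree 4 D),
      u.length + D = dmax → u <+: pix t →
      FullTree.weight G u T * qt t (FullTree.leafOf u T (List.drop u.length (pix t))) (v t)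
        = Qd dmax qt v pix G t D * FullTree.weight (Gnext dmax qt v pix G t) u T
  | D, u, .leaf, hlen, hpre => by
      have hleafOf : ∀ l, FullTree.leafOf u (.leaf : FullTree 4 D) l = u := by
        intro l; cases l <;> rfl
      rw [FullTree.weight_leaf, FullTree.weight_leaf, hleafOf]
      rcases D with _ | j
      · have hu : u = pix t := hpre.eq_of_length (by omega)
        have hGn : Gnext dmax qt v pix G t u = G u := by
          unfold Gnext; exact if_neg (by rintro ⟨-, h2⟩; omega)
        rw [hGn]
        show _ = qt t ((pix t).take dmax) (v t) * _
        rw [show (pix t).take dmax = pix t from List.take_of_length_le (by omega), ← hu]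
        ring
      · have hQ2 := Qd_pos (v := v) (pix := pix) (t := t) hqt hG (j + 1)
        have htake : (pix t).take (dmax - (j + 1)) = u := by
          rw [show dmax - (j + 1) = u.length by omega]
          exact (List.prefix_iff_eq_take.mp hpre).symm
        have hGn : Gnext dmax qt v pix G t u
            = G u * Qd dmax qt v pix G t j / Qd dmax qt v pix G t (j + 1) := by
          unfold Gnext
          rw [if_pos ⟨hpre, by omega⟩, show dmax - u.length - 1 = j by omega,
            show dmax - u.length = j + 1 by omega]
        rw [hGn]
        have hQdef := Qd_succ_eq (G := G) (v := v) (qt := qt) htake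
        rw [hQdef] at hQ2 ⊢
        field_simp
        ring
  | (D + 1), u, .node c, hlen, hpre => by
      have hlt : u.length < dmax := by omega
      have hur : u ++ List.drop u.length (pix t) = pix t := by
        conv_rhs => rw [← List.take_append_drop u.length (pix t)]
        rw [← List.prefix_iff_eq_take.mp hpre]
      have hrlen : (List.drop u.length (pix t)).length = D + 1 := by
        simp [hpixt]; omega
      obtain ⟨i0, tl, htl⟩ : ∃ i0 tl, List.drop u.length (pix t) = i0 :: tl := by
        cases h : List.drop u.length (pix t) with
        | nil => rw [h] at hrlen; simp at hrlen
        | cons a b => exact ⟨a, b, rfl⟩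
      rw [htl] at hur
      have hpre0 : u ++ [i0] <+: pix t := ⟨tl, by simpa using hur⟩
      have hlen0 : (u ++ [i0]).length + D = dmax := by simp; omega
      have hdrop0 : List.drop (u ++ [i0]).length (pix t) = tl := by
        conv_lhs => rw [← hur]
        rw [show u ++ i0 :: tl = (u ++ [i0]) ++ tl by simp, List.drop_left]
      have hleaf : FullTree.leafOf u (.node c) (List.drop u.length (pix t))
          = FullTree.leafOf (u ++ [i0]) (c i0) tl := by rw [htl]; rfl
      have hstep := weight_step hqt hG hpixt (u ++ [i0]) (c i0) hlen0 hpre0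
      rw [hdrop0] at hstep
      have hoff : ∀ i : Fin 4, i ≠ i0 →
          FullTree.weight (Gnext dmax qt v pix G t) (u ++ [i]) (c i)
            = FullTree.weight G (u ++ [i]) (c i) := by
        intro i hi
        apply weight_gnext_off
        intro h3
        have h4 := List.prefix_of_prefix_length_le h3 hpre0 (by simp)
        have h5 := h4.eq_of_length (by simp)
        simp only [List.append_cancel_left_eq, List.cons.injEq] at h5
        exact hi h5.1
      have hGn : Gnext dmax qt v pix G t u
          = G u * Qd dmax qt v pix G t D / Qd dmax qt v pix G t (D + 1) := by
        unfold Gnext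
        rw [if_pos ⟨hpre, hlt⟩, show dmax - u.length - 1 = D by omega,
          show dmax - u.length = D + 1 by omega]
      have hQ := Qd_pos (v := v) (pix := pix) (t := t) hqt hG (D + 1)
      have hprod : (∏ i, FullTree.weight G (u ++ [i]) (c i))
            * qt t (FullTree.leafOf (u ++ [i0]) (c i0) tl) (v t)
          = Qd dmax qt v pix G t D
            * ∏ i, FullTree.weight (Gnext dmax qt v pix G t) (u ++ [i]) (c i) := by
        rw [← Finset.mul_prod_erase Finset.univ
            (fun i => FullTree.weight G (u ++ [i]) (c i)) (Finset.mem_univ i0),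
          ← Finset.mul_prod_erase Finset.univ
            (fun i => FullTree.weight (Gnext dmax qt v pix G t) (u ++ [i]) (c i))
            (Finset.mem_univ i0),
          Finset.prod_congr rfl (fun i hi => hoff i (Finset.ne_of_mem_erase hi))]
        set P := ∏ i ∈ Finset.univ.erase i0, FullTree.weight G (u ++ [i]) (c i)
        calc FullTree.weight G (u ++ [i0]) (c i0) * P
              * qt t (FullTree.leafOf (u ++ [i0]) (c i0) tl) (v t)
            = (FullTree.weight G (u ++ [i0]) (c i0)
                * qt t (FullTree.leafOf (u ++ [i0]) (c i0) tl) (v t)) * P := by ring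
          _ = (Qd dmax qt v pix G t D
                * FullTree.weight (Gnext dmax qt v pix G t) (u ++ [i0]) (c i0)) * P := by
              rw [hstep]
          _ = _ := by ring
      rw [FullTree.weight_node, FullTree.weight_node, hleaf, hGn, mul_assoc, hprod]
      field_simp
      try ring

lemma GT_mem (g : List (Fin 4) → ℝ)
    (hg : ∀ s : List (Fin 4), s.length ≤ dmax → g s ∈ Set.Icc (0 : ℝ) 1)
    (hqt : ∀ t s x, 0 < qt t s x) :
    ∀ t, ∀ s : List (Fin 4), s.length ≤ dmax →
      GT dmax qt v pix g t s ∈ Set.Icc (0 : ℝ) 1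
  | 0 => hg
  | (t + 1) => Gnext_mem hqt (GT_mem g hg hqt t)

lemma GT_zero (g : List (Fin 4) → ℝ)
    (hg1 : ∀ s : List (Fin 4), s.length = dmax → g s = 0) :
    ∀ t, ∀ s : List (Fin 4), s.length = dmax → GT dmax qt v pix g t s = 0
  | 0 => hg1
  | (t + 1) => Gnext_zero (GT_zero g hg1 t)

lemma weight_like (g : List (Fin 4) → ℝ)
    (hg : ∀ s : List (Fin 4), s.length ≤ dmax → g s ∈ Set.Icc (0 : ℝ) 1)
    (hg1 : ∀ s : List (Fin 4), s.length = dmax → g s = 0)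
    (hqt : ∀ t s x, 0 < qt t s x) (hpix : ∀ i, (pix i).length = dmax) :
    ∀ t (m : FullTree 4 dmax),
      FullTree.weight g [] m * like dmax qt v pix m t
        = (∏ i ∈ Finset.range t, Qd dmax qt v pix (GT dmax qt v pix g i) i dmax)
          * FullTree.weight (GT dmax qt v pix g t) [] m
  | 0, m => by simp [like, GT]
  | (t + 1), m => by
      have hstep := weight_step (v := v) (G := GT dmax qt v pix g t) (t := t) hqt
        (GT_mem g hg hqt t) (hpix t) [] m (by simp) List.nil_prefix
      simp only [List.length_nil, List.drop_zero] at hstep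
      have hlike : like dmax qt v pix m (t + 1)
          = like dmax qt v pix m t * qt t (FullTree.leafOf [] m (pix t)) (v t) :=
        Finset.prod_range_succ _ _
      rw [hlike, ← mul_assoc, weight_like g hg hg1 hqt hpix t m, mul_assoc, hstep,
        Finset.prod_range_succ]
      show _ = _ * Qd _ _ _ _ _ _ _ * FullTree.weight
        (Gnext dmax qt v pix (GT dmax qt v pix g t) t) [] m
      ring

end Aux

/-- Blocks are encoded by their quadrant paths `List (Fin 4)` of length
`≤ dmax`, and pixels by paths of full length `dmax`, `pix i` being the pixel scanned at
time `i` (injective raster scan).  With model prior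
`p(m) = weight g [] m = ∏_{s ∈ L^m} (1-g_s) ∏_{s' ∈ I^m} g_{s'}`, likelihood
`p(v^t | m) = like dmax qt v pix m (t+1) = ∏_{i ≤ t} q̃(v_i | v^{i-1}, s_m(i))`, and the
sequentially updated weights `g_{s|t} = GT dmax qt v pix g (t+1) s`, the posterior over
models retains the product form of the prior:
`p(m | v^t) = ∏_{s ∈ L^m} (1 - g_{s|t}) ∏_{s' ∈ I^m} g_{s'|t} = weight g_{·|t} [] m`. -/
theorem stmt9 (dmax : ℕ) (V : Type) [Fintype V]
    (g : List (Fin 4) → ℝ)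
    (hg : ∀ s : List (Fin 4), s.length ≤ dmax → g s ∈ Set.Icc (0 : ℝ) 1)
    (hg1 : ∀ s : List (Fin 4), s.length = dmax → g s = 0)
    (qt : ℕ → List (Fin 4) → V → ℝ)
    (hqt : ∀ t s x, 0 < qt t s x)
    (hqts : ∀ t s, ∑ x : V, qt t s x = 1)
    (v : ℕ → V) (pix : ℕ → List (Fin 4))
    (hpix : ∀ i, (pix i).length = dmax)
    (hinj : ∀ i j, i < 4 ^ dmax → j < 4 ^ dmax → pix i = pix j → i = j)
    (t : ℕ) (ht : t < 4 ^ dmax) (m : FullTree 4 dmax) :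
    FullTree.weight g [] m * like dmax qt v pix m (t + 1)
        / (∑ m' : FullTree 4 dmax, FullTree.weight g [] m' * like dmax qt v pix m' (t + 1))
      = FullTree.weight (GT dmax qt v pix g (t + 1)) [] m := by
  have hW := weight_like (v := v) g hg hg1 hqt hpix (t + 1)
  have hsum : (∑ m' : FullTree 4 dmax, FullTree.weight g [] m' * like dmax qt v pix m' (t + 1))
      = ∏ i ∈ Finset.range (t + 1), Qd dmax qt v pix (GT dmax qt v pix g i) i dmax := by
    rw [Finset.sum_congr rfl fun m' _ => hW m', ← Finset.mul_sum,
      FullTree.sum_weight _ (GT_zero g hg1 (t + 1)) dmax [] (by simp), mul_one]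
  have hC : (0:ℝ) < ∏ i ∈ Finset.range (t + 1),
      Qd dmax qt v pix (GT dmax qt v pix g i) i dmax :=
    Finset.prod_pos fun i _ => Qd_pos hqt (GT_mem g hg hqt i) dmax
  rw [hW m, hsum]
  exact mul_div_cancel_left₀ _ hC.ne'
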